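/- arXiv:1507.03851 — 6 statements merged into one kernel-verified Lean document; each statement's English description precedes it below -/
import Mathlib

section
/- (Soundness of local condition synthesis, Theorem 1.) Let C be a set of transitions, Q : L → (V → Prop) a conditional inductive invariant for C, t_exit = (ℓ̃, τ_e, ℓ_e) a transition with t_exit ∉ C, and φ : V → Prop a property satisfying the Safety condition: for all v, v', if Q ℓ̃ v and τ_e v v', then φ v'. Then for every transition t = (ℓ, τ, ℓ') and all valuations, if (ℓ, v₀) →_t (ℓ', v₁), (ℓ', v₁) →_C^* (ℓ̃, v), (ℓ̃, v) →_{t_exit} (ℓ_e, v'), and Q ℓ' v₁ holds, then φ v' holds. In other words, the program C ∪ {t, t_exit} is (t, Q ℓ')-conditionally safe for the assertion (t_exit, φ) on evaluations whose intermediate steps use only transitions of C. -/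
/-- A program transition: source location, transition relation on valuations, target location. -/
structure Transition (L V : Type*) where
  src : L
  rel : V → V → Prop
  tgt : L

variable {L V : Type*}

/-- Evaluation step via a single transition `t`. -/
def StepT (t : Transition L V) (s s' : L × V) : Prop :=
  s.1 = t.src ∧ s'.1 = t.tgt ∧ t.rel s.2 s'.2

/-- Evaluation step via some transition of the program `P`. -/
def StepP (P : Set (Transition L V)) (s s' : L × V) : Prop :=
  ∃ t ∈ P, StepT t s s'

/-- Reflexive-transitive closure of program evaluation steps. -/
def Steps (P : Set (Transition L V)) : L × V → L × V → Prop :=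
  Relation.ReflTransGen (StepP P)

/-- `Q` is a conditional inductive invariant for the set of transitions `C`. -/
def CondInductiveInv (C : Set (Transition L V)) (Q : L → V → Prop) : Prop :=
  ∀ t ∈ C, ∀ v v' : V, Q t.src v → t.rel v v' → Q t.tgt v'

/-- `P` is safe for the assertion `(t, φ)` (w.r.t. the initial location `ℓ0`). -/
def Safe (ℓ0 : L) (P : Set (Transition L V)) (t : Transition L V) (φ : V → Prop) : Prop :=
  ∀ (v₀ : V) (sb s : L × V), Steps P (ℓ0, v₀) sb → StepT t sb s → φ s.2

/-- `P` is `(t', φ')`-conditionally safe for the assertion `(t, φ)`: every evaluation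
containing a segment `→_{t'} s' →_P^* sb →_t s` with `φ' s'.2` satisfies `φ s.2`. -/
def CondSafe (P : Set (Transition L V)) (t' : Transition L V) (φ' : V → Prop)
    (t : Transition L V) (φ : V → Prop) : Prop :=
  ∀ s₀ s' sb s : L × V, StepT t' s₀ s' → Steps P s' sb → StepT t sb s → φ' s'.2 → φ s.2

/-- Invariant is preserved along Steps. -/
lemma inv_steps (C : Set (Transition L V)) (Q : L → V → Prop)
    (hQ : CondInductiveInv C Q) {a b : L × V} (h : Steps C a b)
    (ha : Q a.1 a.2) : Q b.1 b.2 := by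
  induction h with
  | refl => exact ha
  | tail _ hst ih =>
    obtain ⟨u, hu, h1, h2, h3⟩ := hst
    rw [h2]
    exact hQ u hu _ _ (h1 ▸ ih) h3

/-- Theorem 1: soundness of local condition synthesis. -/
theorem condSafe_sound (C : Set (Transition L V)) (Q : L → V → Prop)
    (hQ : CondInductiveInv C Q)
    (texit : Transition L V) (hexit : texit ∉ C) (φ : V → Prop)
    (hsafety : ∀ v v' : V, Q texit.src v → texit.rel v v' → φ v')
    (t : Transition L V) :
    ∀ v₀ v₁ v v' : V,
      t.rel v₀ v₁ → Steps C (t.tgt, v₁) (texit.src, v) → texit.rel v v' →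
      Q t.tgt v₁ → φ v' := by
  intro v₀ v₁ v v' _ hsteps hrel hQ1
  exact hsafety v v' (inv_steps C Q hQ hsteps hQ1) hrel
end

section
/- (Transitivity of conditional safety under domination.) Let P be a program, t ∈ P a transition, φ : V → Prop, and E = {t̃₁, …, t̃_m} a finite set of transitions of P that dominates t, in the sense that every evaluation of P starting at an initial state and ending with a step via t contains an earlier step via some t̃ᵢ ∈ E. Suppose that for each i, P is (t̃ᵢ, φ̃ᵢ)-conditionally safe for the assertion (t, φ), and P is safe for the assertion (t̃ᵢ, φ̃ᵢ). Then P is safe for the assertion (t, φ). -/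
variable {L V : Type*}

/-- transitivity of conditional safety under domination. -/
theorem safe_of_dominating_condSafe (ℓ0 : L) (P : Set (Transition L V))
    (t : Transition L V) (ht : t ∈ P) (φ : V → Prop)
    (m : ℕ) (E : Fin m → Transition L V) (φE : Fin m → V → Prop)
    (hEP : ∀ i, E i ∈ P)
    (hdom : ∀ (v₀ : V) (sb s : L × V), Steps P (ℓ0, v₀) sb → StepT t sb s →
      ∃ i : Fin m, ∃ s₁ s₂ : L × V,
        Steps P (ℓ0, v₀) s₁ ∧ StepT (E i) s₁ s₂ ∧ Steps P s₂ sb)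
    (hcond : ∀ i, CondSafe P (E i) (φE i) t φ)
    (hsafe : ∀ i, Safe ℓ0 P (E i) (φE i)) :
    Safe ℓ0 P t φ := by
  intro v₀ sb s hsteps hstep
  obtain ⟨i, s₁, s₂, h1, h2, h3⟩ := hdom v₀ sb s hsteps hstep
  exact hcond i s₁ s₂ sb s h2 h3 hstep (hsafe i v₀ s₁ s₂ h1 h2)
end

section
/- (Narrowing of component transitions preserves unsafe evaluations; from the proof of Theorem 2.) Let C be a set of transitions, Q : L → (V → Prop) a conditional inductive invariant for C, and t_exit = (ℓ̃, τ_e, ℓ_e) ∉ C with φ : V → Prop satisfying: for all v, v', if Q ℓ̃ v and τ_e v v' then φ v'. Consider any evaluation of the form (ℓ', v₁) →_C^* (ℓ_a, v_a) →_{t_c} (ℓ_b, v_b) →_C^* (ℓ̃, v) →_{t_exit} (ℓ_e, v') with t_c ∈ C and ¬ φ v'. Then ¬ Q ℓ_a v_a and ¬ Q ℓ_b v_b; that is, every step inside the component occurring in an unsafe evaluation satisfies the negation of the conditional invariant at both its source and target, so the evaluation survives replacing each (ℓ, τ, ℓ') ∈ C by (ℓ, τ ∧ ¬Q(ℓ)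 ∧ ¬Q(ℓ')', ℓ'). -/
variable {L V : Type*}

lemma steps_preserve_inv (C : Set (Transition L V)) (Q : L → V → Prop)
    (hQ : CondInductiveInv C Q) {s s' : L × V} (h : Steps C s s')
    (hs : Q s.1 s.2) : Q s'.1 s'.2 := by
  induction h with
  | refl => exact hs
  | tail _ hstep ih =>
    obtain ⟨t, htC, h1, h2, h3⟩ := hstep
    rw [h2]
    exact hQ t htC _ _ (h1 ▸ ih) h3

/-- narrowing of component transitions preserves unsafe evaluations. -/
theorem narrowing_component_preserves_unsafe (C : Set (Transition L V))
    (Q : L → V → Prop) (hQ : CondInductiveInv C Q)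
    (texit : Transition L V) (hexit : texit ∉ C) (φ : V → Prop)
    (hsafety : ∀ v v' : V, Q texit.src v → texit.rel v v' → φ v')
    (tc : Transition L V) (htc : tc ∈ C) :
    ∀ (ℓ' : L) (v₁ va vb v v' : V),
      Steps C (ℓ', v₁) (tc.src, va) → tc.rel va vb →
      Steps C (tc.tgt, vb) (texit.src, v) → texit.rel v v' → ¬ φ v' →
      ¬ Q tc.src va ∧ ¬ Q tc.tgt vb := by
  intro ℓ' v₁ va vb v v' _ hrel hsteps2 hrelE hnφ
  have hb : ¬ Q tc.tgt vb := fun hqb =>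
    hnφ (hsafety v v' (steps_preserve_inv C Q hQ hsteps2 hqb) hrelE)
  exact ⟨fun hqa => hb (hQ tc htc _ _ hqa hrel), hb⟩
end

section
/- (Combination step in the soundness of CheckSafe, Theorem 2.) Let P be a program, C ⊆ P a set of transitions, E_C ⊆ P a set of entry transitions, t_exit = (ℓ̃, τ_e, ℓ_e) ∈ P with t_exit ∉ C, and φ : V → Prop. Assume: (i) Q : L → (V → Prop) is a conditional inductive invariant for C and for all v, v', Q ℓ̃ v and τ_e v v' imply φ v'; (ii) for each entry t = (ℓ, τ, ℓ') ∈ E_C, Q ℓ' is a conjunction of finitely many literals, and P is safe for the assertion (t, L) for every such literal L; (iii) every evaluation of P from an initial state ending with a step via t_exit contains a step via some entry t = (ℓ, τ, ℓ') ∈ E_C after which all steps up to the final t_exit step use transitions in C. Then P is safe for the assertion (t_exit, φ). -/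
variable {L V : Type*}

/-- Theorem 2, combination step: soundness of CheckSafe. -/
theorem checkSafe_sound (ℓ0 : L) (P C E : Set (Transition L V))
    (hCP : C ⊆ P) (hEP : E ⊆ P)
    (texit : Transition L V) (hexitP : texit ∈ P) (hexitC : texit ∉ C)
    (φ : V → Prop) (Q : L → V → Prop)
    (hQ : CondInductiveInv C Q)
    (hsafety : ∀ v v' : V, Q texit.src v → texit.rel v v' → φ v')
    (hentries : ∀ t ∈ E, ∃ (k : ℕ) (Lit : Fin k → V → Prop),
      (∀ v : V, Q t.tgt v ↔ ∀ i, Lit i v) ∧ ∀ i, Safe ℓ0 P t (Lit i))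
    (hdom : ∀ (v₀ : V) (sb s : L × V), Steps P (ℓ0, v₀) sb → StepT texit sb s →
      ∃ t ∈ E, ∃ s₁ s₂ : L × V,
        Steps P (ℓ0, v₀) s₁ ∧ StepT t s₁ s₂ ∧ Steps C s₂ sb) :
    Safe ℓ0 P texit φ := by
  intro v₀ sb s hsteps hstep
  obtain ⟨t, htE, s₁, s₂, h₁, h₂, h₃⟩ := hdom v₀ sb s hsteps hstep
  obtain ⟨k, Lit, hiff, hsafe⟩ := hentries t htE
  have hQ2 : Q s₂.1 s₂.2 := by
    rw [h₂.2.1, hiff]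
    exact fun i => hsafe i v₀ s₁ s₂ h₁ h₂
  have key : ∀ a b : L × V, Steps C a b → Q a.1 a.2 → Q b.1 b.2 := by
    intro a b hab
    induction hab with
    | refl => exact id
    | tail _ hst ih =>
      intro ha
      obtain ⟨u, huC, h1, h2, h3⟩ := hst
      rw [h2]
      exact hQ u huC _ _ (h1 ▸ ih ha) h3
  have hQb := key s₂ sb h₃ hQ2
  rw [hstep.1] at hQb
  exact hsafety sb.2 s.2 hQb hstep.2.2
end

section
/- (Correctness of program strengthening after a successful proof.) Let P be a program, t = (ℓ, τ, ℓ') ∈ P, and φ : V → Prop such that P is safe for the assertion (t, φ). Let P' be the program obtained from P by replacing t with the strengthened transition t' = (ℓ, λ v v', τ v v' ∧ φ v', ℓ'). Then P and P' have exactly the same evaluations from initial states: for all states s, s', (s is initial and s →_P^* s') if and only if (s is initial and s →_{P'}^* s'). In particular, P and P' have the same reachable states. -/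
variable {L V : Type*}

/-- strengthening a proven-safe transition preserves evaluations from initial states. -/
theorem strengthening_correct (ℓ0 : L) (P : Set (Transition L V))
    (t : Transition L V) (ht : t ∈ P) (φ : V → Prop)
    (hsafe : Safe ℓ0 P t φ) :
    ∀ s s' : L × V,
      (s.1 = ℓ0 ∧ Steps P s s') ↔
      (s.1 = ℓ0 ∧
        Steps ((P \ {t}) ∪ {⟨t.src, fun v v' => t.rel v v' ∧ φ v', t.tgt⟩}) s s') := by
  intro s s'
  constructor
  · rintro ⟨h0, hsteps⟩
    refine ⟨h0, ?_⟩
    induction hsteps with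
    | refl => exact Relation.ReflTransGen.refl
    | tail hPab hbc ih =>
      refine Relation.ReflTransGen.tail ih ?_
      obtain ⟨u, hu, hstep⟩ := hbc
      by_cases hut : u = t
      · subst hut
        have hφ : φ _ := hsafe s.2 _ _ ((Prod.ext h0.symm rfl : ((ℓ0, s.2) : L × V) = s) ▸ hPab) hstep
        exact ⟨_, Or.inr rfl, hstep.1, hstep.2.1, hstep.2.2, hφ⟩
      · exact ⟨u, Or.inl ⟨hu, hut⟩, hstep⟩
  · rintro ⟨h0, hsteps⟩
    refine ⟨h0, ?_⟩
    induction hsteps with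
    | refl => exact Relation.ReflTransGen.refl
    | tail _ hbc ih =>
      refine Relation.ReflTransGen.tail ih ?_
      obtain ⟨u, hu, hstep⟩ := hbc
      rcases hu with ⟨huP, _⟩ | hu
      · exact ⟨u, huP, hstep⟩
      · rcases hu with rfl
        exact ⟨t, ht, hstep.1, hstep.2.1, hstep.2.2.1⟩
end

section
/- (Strengthening of narrowed transitions.) Let P be a program and t = (ℓ, τ, ℓ') ∈ P a transition whose relation has the narrowed form τ v v' ↔ (τ_o v v' ∧ ¬ψ₁ v' ∧ … ∧ ¬ψ_m v') for some relation τ_o : V → V → Prop and predicates ψ₁, …, ψ_m : V → Prop. If P is safe for the assertion (t, φ), then for every evaluation (ℓ0, v₀) →_P^* (ℓ, v) starting at an initial state and every v' with τ_o v v', the disjunction ψ₁ v' ∨ … ∨ ψ_m v' ∨ φ v' holds; i.e., ψ₁' ∨ … ∨ ψ_m' ∨ φ' always holds after using the original (unnarrowed) transition t_o = (ℓ, τ_o, ℓ'). -/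
variable {L V : Type*}

/-- strengthening of narrowed transitions. -/
theorem strengthening_narrowed (ℓ0 : L) (P : Set (Transition L V))
    (t : Transition L V) (ht : t ∈ P)
    (τo : V → V → Prop) (m : ℕ) (ψ : Fin m → V → Prop)
    (hnarrow : ∀ v v' : V, t.rel v v' ↔ (τo v v' ∧ ∀ i, ¬ ψ i v'))
    (φ : V → Prop) (hsafe : Safe ℓ0 P t φ) :
    ∀ v₀ v : V, Steps P (ℓ0, v₀) (t.src, v) →
      ∀ v' : V, τo v v' → (∃ i, ψ i v') ∨ φ v' := by
  intro v₀ v hsteps v' hτo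
  by_cases h : ∃ i, ψ i v'
  · exact Or.inl h
  · right
    push_neg at h
    exact hsafe v₀ (t.src, v) (t.tgt, v') hsteps ⟨rfl, rfl, (hnarrow v v').mpr ⟨hτo, h⟩⟩
end
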